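/- Let G be a totally disconnected locally compact group and Ω a discrete left G-set with compact open point stabilizers. Then the permutation module Q[Ω] is a projective object in the category of discrete Q[G]-modules. Consequently, the category of discrete Q[G]-modules has enough projectives. -/

import Mathlib

universe u

/-- A discrete `ℚ[G]`-module over a topological group `G`: a `ℚ`-vector space with
a `ℚ`-linear `G`-action in which every element has open stabilizer. -/
structure DiscGMod (G : Type u) [Group G] [TopologicalSpace G] : Type (u + 1) where
  carrier : Type u
  [acg : AddCommGroup carrier]
  [mod : Module ℚ carrier]
  [act : DistribMulAction G carrier]
  [cmm : SMulCommClass G ℚ carrier]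
  discrete : ∀ m : carrier, IsOpen ((MulAction.stabilizer G m : Subgroup G) : Set G)

attribute [instance] DiscGMod.acg DiscGMod.mod DiscGMod.act DiscGMod.cmm

/-- A morphism of discrete `ℚ[G]`-modules is a `G`-equivariant `ℚ`-linear map. -/
def DiscGMod.Equivariant {G : Type u} [Group G] [TopologicalSpace G]
    {A B : DiscGMod G} (f : A.carrier →ₗ[ℚ] B.carrier) : Prop :=
  ∀ (g : G) (a : A.carrier), f (g • a) = g • f a

/-- Projectivity, relative to the category of discrete `ℚ[G]`-modules, of a
`ℚ`-module `P` equipped with a `G`-action `σ`: every equivariant map from `P` to a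
discrete module lifts along every equivariant surjection of discrete modules. -/
def ProjOverDiscrete (G : Type u) [Group G] [TopologicalSpace G]
    (P : Type u) [AddCommGroup P] [Module ℚ P] (σ : G → P → P) : Prop :=
  ∀ (A B : DiscGMod G) (π : B.carrier →ₗ[ℚ] A.carrier),
    DiscGMod.Equivariant π → Function.Surjective π →
    ∀ φ : P →ₗ[ℚ] A.carrier, (∀ (g : G) (x : P), φ (σ g x) = g • φ x) →
    ∃ ψ : P →ₗ[ℚ] B.carrier, (∀ (g : G) (x : P), ψ (σ g x) = g • ψ x) ∧ π.comp ψ = φ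

open scoped Pointwise
open Set Filter Topology TopologicalGroup MulAction

lemma myMulClosure {G : Type*} [Group G] [TopologicalSpace G] [IsTopologicalGroup G]
    {W : Set G} (Wcomp : IsCompact W) (Wopen : IsOpen W) :
    ∃ T ∈ 𝓝 (1 : G), W * T ⊆ W := by
  apply Wcomp.induction_on (p := fun S ↦ ∃ T ∈ 𝓝 (1 : G), S * T ⊆ W)
    ⟨Set.univ, by simp only [univ_mem, empty_mul, empty_subset, and_self]⟩
    (fun _ _ huv ⟨T, hT, mem⟩ ↦ ⟨T, hT, (mul_subset_mul_right huv).trans mem⟩)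
    fun U V ⟨T₁, hT₁, mem1⟩ ⟨T₂, hT₂, mem2⟩ ↦ ⟨T₁ ∩ T₂, inter_mem hT₁ hT₂, by
      rw [union_mul]
      exact union_subset (mul_subset_mul_left inter_subset_left |>.trans mem1)
        (mul_subset_mul_left inter_subset_right |>.trans mem2)⟩
  intro x memW
  have : (x, 1) ∈ (fun p : G × G ↦ p.1 * p.2) ⁻¹' W := by simp [memW]
  rcases isOpen_prod_iff.mp (continuous_mul.isOpen_preimage W Wopen) x 1 this with
    ⟨U, V, Uopen, Vopen, xmemU, onememV, prodsub⟩
  have h6 : U * V ⊆ W := mul_subset_iff.mpr (fun _ hx _ hy ↦ prodsub (mk_mem_prod hx hy))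
  exact ⟨U ∩ W, ⟨U, Uopen.mem_nhds xmemU, W, fun _ a ↦ a, rfl⟩,
    V, IsOpen.mem_nhds Vopen onememV, fun _ a ↦ h6 ((mul_subset_mul_right inter_subset_left) a)⟩

lemma myMulInvNhd {G : Type*} [Group G] [TopologicalSpace G] [IsTopologicalGroup G]
    {W : Set G} (Wcomp : IsCompact W) (Wopen : IsOpen W) :
    ∃ T, IsTopologicalGroup.mulInvClosureNhd T W := by
  rcases myMulClosure Wcomp Wopen with ⟨S, Smemnhds, mulclose⟩
  rcases mem_nhds_iff.mp Smemnhds with ⟨U, UsubS, Uopen, onememU⟩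
  refine ⟨U ∩ U⁻¹, ?_, ?_, ?_, ?_⟩
  · simp [Uopen.mem_nhds onememU, inv_mem_nhds_one]
  · simp [inter_comm]
  · exact Uopen.inter Uopen.inv
  · exact fun a ha ↦ mulclose (mul_subset_mul_left UsubS (mul_subset_mul_left inter_subset_left ha))

theorem myVanDantzigCore {G : Type*} [Group G] [TopologicalSpace G] [IsTopologicalGroup G]
    {W : Set G} (Wcomp : IsCompact W) (Wopen : IsOpen W) (einW : (1:G) ∈ W) :
    ∃ H : Subgroup G, IsOpen (H : Set G) ∧ IsCompact (H : Set G) ∧ (H : Set G) ⊆ W := by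
  rcases myMulInvNhd Wcomp Wopen with ⟨V, hV⟩
  let S : Subgroup G := {
    carrier := ⋃ n, V ^ (n + 1)
    mul_mem' := fun ha hb ↦ by
      rcases mem_iUnion.mp ha with ⟨k, hk⟩
      rcases mem_iUnion.mp hb with ⟨l, hl⟩
      apply mem_iUnion.mpr
      use k + 1 + l
      rw [add_assoc, pow_add]
      exact Set.mul_mem_mul hk hl
    one_mem' := by
      apply mem_iUnion.mpr
      use 0
      simp [mem_of_mem_nhds hV.nhds]
    inv_mem' := fun ha ↦ by
      rcases mem_iUnion.mp ha with ⟨k, hk⟩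
      apply mem_iUnion.mpr
      use k
      rw [← hV.inv]
      simpa only [inv_pow, Set.mem_inv, inv_inv] using hk }
  have hSopen : IsOpen (⋃ n, V ^ (n + 1)) := by
    refine isOpen_iUnion (fun n ↦ ?_)
    rw [pow_succ]
    exact hV.isOpen.mul_left
  have mulVpow (n : ℕ) : W * V ^ (n + 1) ⊆ W := by
    induction' n with n ih
    · simp [hV.mul]
    · rw [pow_succ, ← mul_assoc]
      exact (Set.mul_subset_mul_right ih).trans hV.mul
  have hsub : (S : Set G) ⊆ W := by
    refine iUnion_subset fun i _ a ↦ mulVpow i ?_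
    rw [Set.mem_mul] at *
    exact ⟨1, einW, _, a, one_mul _⟩
  refine ⟨S, hSopen, ?_, hsub⟩
  exact Wcomp.of_isClosed_subset (S.isClosed_of_isOpen hSopen) hsub
open scoped Pointwise
open MulAction

lemma myFiniteImage {G : Type*} [Group G] [TopologicalSpace G] [IsTopologicalGroup G]
    {X : Type*} [MulAction G X] (b : X)
    (hb : IsOpen ((MulAction.stabilizer G b : Subgroup G) : Set G))
    {K : Set G} (hK : IsCompact K) :
    ((fun k => k • b) '' K).Finite := by
  obtain ⟨t, ht⟩ := hK.elim_finite_subcover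
    (fun k : K => (k : G) • ((MulAction.stabilizer G b : Subgroup G) : Set G))
    (fun k => hb.smul _)
    (fun x hx => Set.mem_iUnion.mpr ⟨⟨x, hx⟩, ⟨1, Subgroup.one_mem _, mul_one x⟩⟩)
  apply Set.Finite.subset (t.finite_toSet.image (fun k : K => (k : G) • b))
  rintro _ ⟨k, hk, rfl⟩
  obtain ⟨i, hi, s, hs, rfl⟩ : ∃ i ∈ t, ∃ s ∈ (MulAction.stabilizer G b : Subgroup G),
      (i : G) • s = k := by
    have := ht hk
    simp only [Set.mem_iUnion] at this
    obtain ⟨i, hi, hmem⟩ := this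
    obtain ⟨s, hs, hks⟩ := hmem
    exact ⟨i, hi, s, hs, hks⟩
  refine ⟨i, hi, ?_⟩
  have hs' : s • b = b := hs
  simp only [smul_eq_mul, mul_smul, hs']

lemma exists_fixed_lift {G : Type u} [Group G] [TopologicalSpace G] [IsTopologicalGroup G]
    (A B : DiscGMod G) (π : B.carrier →ₗ[ℚ] A.carrier)
    (hπ : DiscGMod.Equivariant π) (hs : Function.Surjective π)
    (a : A.carrier) (K : Subgroup G) (hKc : IsCompact (K : Set G))
    (ha : ∀ k ∈ K, k • a = a) :
    ∃ b : B.carrier, (∀ k ∈ K, k • b = b) ∧ π b = a := by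
  classical
  obtain ⟨b0, hb0⟩ := hs a
  have hFfin : ((fun k => k • b0) '' (K : Set G)).Finite := myFiniteImage b0 (B.discrete b0) hKc
  set Fs := hFfin.toFinset with hFs
  have hmem : ∀ x, x ∈ Fs ↔ ∃ k ∈ K, k • b0 = x := by
    intro x
    simp only [hFs, Set.Finite.mem_toFinset, Set.mem_image, SetLike.mem_coe]
  have hne : Fs.Nonempty := ⟨b0, (hmem b0).mpr ⟨1, K.one_mem, one_smul _ _⟩⟩
  refine ⟨(Fs.card : ℚ)⁻¹ • Fs.sum id, ?_, ?_⟩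
  · intro k hk
    have himg : Fs.image (fun x => k • x) = Fs := by
      ext x
      simp only [Finset.mem_image]
      constructor
      · rintro ⟨y, hy, rfl⟩
        obtain ⟨k', hk', rfl⟩ := (hmem y).mp hy
        exact (hmem _).mpr ⟨k * k', K.mul_mem hk hk', mul_smul _ _ _⟩
      · intro hx
        obtain ⟨k', hk', rfl⟩ := (hmem x).mp hx
        refine ⟨(k⁻¹ * k') • b0, (hmem _).mpr ⟨k⁻¹ * k', K.mul_mem (K.inv_mem hk) hk', rfl⟩, ?_⟩
        rw [← mul_smul, mul_inv_cancel_left]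
    have hinj : ∀ x ∈ Fs, ∀ y ∈ Fs, k • x = k • y → x = y :=
      fun x _ y _ h => smul_left_cancel k h
    have hsum : ∑ x ∈ Fs, k • x = Fs.sum id := by
      have h1 : ∑ x ∈ Fs.image (fun x => k • x), id x = ∑ x ∈ Fs, id (k • x) :=
        Finset.sum_image hinj
      rw [himg] at h1
      simpa using h1.symm
    rw [smul_comm, Finset.smul_sum]
    simp only [id] at hsum ⊢
    rw [hsum]
  · rw [map_smul, map_sum]
    have : ∀ x ∈ Fs, π (id x) = a := by
      intro x hx
      obtain ⟨k, hk, rfl⟩ := (hmem x).mp hx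
      rw [id, hπ, hb0, ha k hk]
    rw [Finset.sum_congr rfl this, Finset.sum_const, ← Nat.cast_smul_eq_nsmul ℚ, smul_smul,
      inv_mul_cancel₀ (by exact_mod_cast Finset.card_ne_zero.mpr hne), one_smul]

lemma part1 (G : Type u) [Group G] [TopologicalSpace G] [IsTopologicalGroup G]
    (Ω : Type u) [MulAction G Ω]
    (hΩ : ∀ ω : Ω, IsOpen ((MulAction.stabilizer G ω : Subgroup G) : Set G) ∧
      IsCompact ((MulAction.stabilizer G ω : Subgroup G) : Set G)) :
    ProjOverDiscrete G (Ω →₀ ℚ) (fun g f => Finsupp.mapDomain (fun ω : Ω => g • ω) f) := by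
  intro A B π hπ hsurj φ hφ
  -- each basis vector's image is fixed by the stabilizer
  have hfix : ∀ (ω : Ω) (k : G), k ∈ MulAction.stabilizer G ω →
      k • φ (Finsupp.single ω 1) = φ (Finsupp.single ω 1) := by
    intro ω k hk
    rw [← hφ]
    simp only [Finsupp.mapDomain_single]
    rw [show k • ω = ω from hk]
  -- choose stabilizer-fixed preimages
  have hbex : ∀ ω : Ω, ∃ b : B.carrier,
      (∀ k ∈ MulAction.stabilizer G ω, k • b = b) ∧ π b = φ (Finsupp.single ω 1) :=
    fun ω => exists_fixed_lift A B π hπ hsurj _ _ ((hΩ ω).2) (hfix ω)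
  choose b hbfix hbπ using hbex
  -- orbit representatives
  let r : Ω → Ω := fun ω => (Quotient.mk (MulAction.orbitRel G Ω) ω).out
  have hrex : ∀ ω : Ω, ∃ t : G, t • r ω = ω := by
    intro ω
    have : (Quotient.mk (MulAction.orbitRel G Ω) (r ω)) =
        Quotient.mk (MulAction.orbitRel G Ω) ω := Quotient.out_eq _
    have h2 : r ω ∈ MulAction.orbit G ω := Quotient.exact this
    obtain ⟨t, ht⟩ := h2
    exact ⟨t⁻¹, by rw [← ht, ← mul_smul, inv_mul_cancel, one_smul]⟩
  choose t ht using hrex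
  have hrinv : ∀ (g : G) (ω : Ω), r (g • ω) = r ω := by
    intro g ω
    have : (Quotient.mk (MulAction.orbitRel G Ω) (g • ω)) =
        Quotient.mk (MulAction.orbitRel G Ω) ω := Quotient.sound ⟨g, rfl⟩
    simp only [r, this]
  set c : Ω → B.carrier := fun ω => t ω • b (r ω) with hc
  have hceq : ∀ (g : G) (ω : Ω), c (g • ω) = g • c ω := by
    intro g ω
    have hk : ((g * t ω)⁻¹ * t (g • ω)) ∈ MulAction.stabilizer G (r ω) := by
      have h1 : t (g • ω) • r ω = g • ω := by rw [← hrinv g ω]; exact ht (g • ω)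
      have h2 : (g * t ω) • r ω = g • ω := by rw [mul_smul, ht]
      simp only [MulAction.mem_stabilizer_iff, mul_smul, h1]
      rw [← h2, ← mul_smul, inv_mul_cancel, one_smul]
    calc c (g • ω) = t (g • ω) • b (r ω) := by rw [hc]; simp only [hrinv g ω]
      _ = ((g * t ω) * ((g * t ω)⁻¹ * t (g • ω))) • b (r ω) := by
          rw [mul_inv_cancel_left]
      _ = (g * t ω) • (((g * t ω)⁻¹ * t (g • ω)) • b (r ω)) := mul_smul _ _ _
      _ = (g * t ω) • b (r ω) := by rw [hbfix _ _ hk]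
      _ = g • c ω := by rw [mul_smul]
  have hcπ : ∀ ω : Ω, π (c ω) = φ (Finsupp.single ω 1) := by
    intro ω
    rw [hc]
    simp only
    rw [hπ, hbπ, ← hφ]
    simp only [Finsupp.mapDomain_single, ht]
  refine ⟨(Finsupp.lift B.carrier ℚ Ω) c, ?_, ?_⟩
  · intro g x
    induction x using Finsupp.induction_linear with
    | zero => simp
    | add f f' hf hf' =>
        simp only [Finsupp.mapDomain_add, map_add, hf, hf', smul_add]
    | single ω q =>
        simp only [Finsupp.mapDomain_single, Finsupp.lift_apply,
          Finsupp.sum_single_index, zero_smul, hceq, smul_comm q g]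
  · apply Finsupp.lhom_ext
    intro ω q
    simp only [LinearMap.comp_apply, Finsupp.lift_apply, Finsupp.sum_single_index, zero_smul,
      map_smul, hcπ, ← φ.map_smul, Finsupp.smul_single, smul_eq_mul, mul_one]

theorem myVanDantzig {G : Type*} [Group G] [TopologicalSpace G] [IsTopologicalGroup G]
    [TotallyDisconnectedSpace G] [LocallyCompactSpace G]
    {V : Set G} (hV : IsOpen V) (h1 : (1:G) ∈ V) :
    ∃ H : Subgroup G, IsOpen (H : Set G) ∧ IsCompact (H : Set G) ∧ (H : Set G) ⊆ V := by
  have hone : IsClosed ({1} : Set G) := by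
    have := totallyDisconnectedSpace_iff_connectedComponent_singleton.mp
      (inferInstance : TotallyDisconnectedSpace G) (1 : G)
    rw [← this]; exact isClosed_connectedComponent
  have : T2Space G := IsTopologicalGroup.t2Space_iff_one_closed.mpr hone
  obtain ⟨K, Kcomp, hK1, hKV⟩ := exists_compact_subset hV h1
  obtain ⟨W, hWclopen, hW1, hWK⟩ :=
    (loc_compact_Haus_tot_disc_of_zero_dim).mem_nhds_iff.1 (isOpen_interior.mem_nhds hK1)
  have Wcomp : IsCompact W :=
    Kcomp.of_isClosed_subset hWclopen.1 (hWK.trans interior_subset)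
  obtain ⟨H, hh1, hh2, hh3⟩ := myVanDantzigCore Wcomp hWclopen.2 hW1
  exact ⟨H, hh1, hh2, hh3.trans ((hWK.trans interior_subset).trans hKV)⟩

lemma part2 (G : Type u) [Group G] [TopologicalSpace G] [IsTopologicalGroup G]
    [TotallyDisconnectedSpace G] [LocallyCompactSpace G] (M : DiscGMod G) :
    ∃ (Ω' : Type u) (a : G → Ω' → Ω'),
      (∀ ω, a 1 ω = ω) ∧ (∀ g h ω, a (g * h) ω = a g (a h ω)) ∧
      (∀ ω : Ω', IsOpen {g : G | a g ω = ω} ∧ IsCompact {g : G | a g ω = ω}) ∧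
      ∃ π : (Ω' →₀ ℚ) →ₗ[ℚ] M.carrier,
        (∀ (g : G) (f : Ω' →₀ ℚ), π (Finsupp.mapDomain (a g) f) = g • π f) ∧
        Function.Surjective π := by
  -- compact open subgroup inside each stabilizer
  have hU : ∀ m : M.carrier, ∃ U : Subgroup G, IsOpen (U : Set G) ∧ IsCompact (U : Set G) ∧
      (U : Set G) ⊆ (MulAction.stabilizer G m : Subgroup G) :=
    fun m => myVanDantzig (M.discrete m) (Subgroup.one_mem _)
  choose U hUo hUc hUs using hU
  refine ⟨(Σ m : M.carrier, G ⧸ U m), fun g ω => ⟨ω.1, g • ω.2⟩, ?_, ?_, ?_, ?_⟩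
  · rintro ⟨m, x⟩; simp [one_smul]
  · rintro g h ⟨m, x⟩; simp [mul_smul]
  · rintro ⟨m, x⟩
    set g0 := Quotient.out x with hg0
    have hout : (g0 : G ⧸ U m) = x := QuotientGroup.out_eq' x
    have hiff : ∀ γ : G, ((⟨m, γ • x⟩ : Σ m : M.carrier, G ⧸ U m) = ⟨m, x⟩) ↔
        g0⁻¹ * γ * g0 ∈ U m := by
      intro γ
      rw [Sigma.mk.inj_iff]
      simp only [heq_eq_eq, true_and]
      rw [← hout]
      have : γ • ((g0 : G ⧸ U m)) = ((γ * g0 : G) : G ⧸ U m) := rfl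
      rw [this, QuotientGroup.eq]
      constructor
      · intro h
        have := (U m).inv_mem h
        simpa [mul_assoc] using this
      · intro h
        have := (U m).inv_mem h
        simpa [mul_assoc] using this
    constructor
    · have : {g : G | (⟨m, g • x⟩ : Σ m : M.carrier, G ⧸ U m) = ⟨m, x⟩} =
          (fun γ => g0⁻¹ * γ * g0) ⁻¹' (U m : Set G) := by
        ext γ; exact hiff γ
      rw [this]
      exact (hUo m).preimage (by continuity)
    · have : {g : G | (⟨m, g • x⟩ : Σ m : M.carrier, G ⧸ U m) = ⟨m, x⟩} =
          (fun u => g0 * u * g0⁻¹) '' (U m : Set G) := by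
        ext γ
        rw [Set.mem_setOf_eq, hiff γ]
        constructor
        · intro h
          exact ⟨g0⁻¹ * γ * g0, h, by group⟩
        · rintro ⟨u, hu, rfl⟩
          simpa [mul_assoc] using hu
      rw [this]
      exact (hUc _).image (by continuity)
  · -- the evaluation map
    have hwd : ∀ (m : M.carrier) (g g' : G), g⁻¹ * g' ∈ U m → g • m = g' • m := by
      intro m g g' hgg'
      have : (g⁻¹ * g') • m = m := hUs m hgg'
      calc g • m = g • ((g⁻¹ * g') • m) := by rw [this]
        _ = g' • m := by rw [← mul_smul, mul_inv_cancel_left]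
    set e : (Σ m : M.carrier, G ⧸ U m) → M.carrier :=
      fun ω => Quotient.liftOn' ω.2 (fun g => g • ω.1)
        (fun g g' h => hwd ω.1 g g' (QuotientGroup.leftRel_apply.mp h)) with he
    have he_mk : ∀ (m : M.carrier) (g : G), e ⟨m, (g : G ⧸ U m)⟩ = g • m := fun m g => rfl
    refine ⟨(Finsupp.lift M.carrier ℚ _) e, ?_, ?_⟩
    · intro g f
      induction f using Finsupp.induction_linear with
      | zero => simp
      | add f f' hf hf' =>
          simp only [Finsupp.mapDomain_add, map_add, hf, hf', smul_add]
      | single ω q =>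
          obtain ⟨m, x⟩ := ω
          induction x using QuotientGroup.induction_on with
          | H h =>
            have hgs : (⟨m, g • ((h : G) : G ⧸ U m)⟩ : Σ m : M.carrier, G ⧸ U m) =
                ⟨m, ((g * h : G) : G ⧸ U m)⟩ := rfl
            simp only [Finsupp.mapDomain_single, Finsupp.lift_apply,
              Finsupp.sum_single_index, zero_smul, hgs, he_mk, mul_smul, smul_comm q g]
    · intro m
      refine ⟨Finsupp.single ⟨m, ((1 : G) : G ⧸ U m)⟩ 1, ?_⟩
      simp [Finsupp.lift_apply, Finsupp.sum_single_index, he_mk]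

/-- Let `G` be a t.d.l.c. group and `Ω` a discrete left `G`-set
with compact (open) stabilizers.  Then the permutation module `ℚ[Ω]` is projective
in the category of discrete `ℚ[G]`-modules, and consequently this category has
enough projectives: every discrete `ℚ[G]`-module is an equivariant quotient of
such a permutation module. -/
theorem permutation_module_projective (G : Type u) [Group G] [TopologicalSpace G]
    [IsTopologicalGroup G] [TotallyDisconnectedSpace G] [LocallyCompactSpace G]
    (Ω : Type u) [MulAction G Ω]
    (hΩ : ∀ ω : Ω, IsOpen ((MulAction.stabilizer G ω : Subgroup G) : Set G) ∧
      IsCompact ((MulAction.stabilizer G ω : Subgroup G) : Set G)) :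
    ProjOverDiscrete G (Ω →₀ ℚ) (fun g f => Finsupp.mapDomain (fun ω : Ω => g • ω) f) ∧
    ∀ M : DiscGMod G, ∃ (Ω' : Type u) (a : G → Ω' → Ω'),
      (∀ ω, a 1 ω = ω) ∧ (∀ g h ω, a (g * h) ω = a g (a h ω)) ∧
      (∀ ω : Ω', IsOpen {g : G | a g ω = ω} ∧ IsCompact {g : G | a g ω = ω}) ∧
      ∃ π : (Ω' →₀ ℚ) →ₗ[ℚ] M.carrier,
        (∀ (g : G) (f : Ω' →₀ ℚ), π (Finsupp.mapDomain (a g) f) = g • π f) ∧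
        Function.Surjective π := by
  exact ⟨part1 G Ω hΩ, fun M => part2 G M⟩
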